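/- (Exact first-order entropy change under a natural policy gradient step.) Let N ≥ 1, let a ∈ ℝ^N be a logits vector with softmax distribution p = softmax(a), and let A ∈ ℝ^N be a fixed advantage vector. For η ∈ ℝ define h(η) = H(softmax(a + η A)), where H(q) = −∑_{n=1}^N q_n log q_n is the Shannon entropy. Then h is differentiable at η = 0 and h′(0) = −Cov_{n∼p}(log p_n, A_n) = −( ∑_{n=1}^N p_n (log p_n) A_n − (∑_{n=1}^N p_n log p_n)(∑_{n=1}^N p_n A_n) ). -/

import Mathlib

/-- The softmax distribution induced by a logits vector `a : ℝ^N`. -/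
noncomputable def softmax {N : ℕ} (a : Fin N → ℝ) : Fin N → ℝ :=
  fun n => Real.exp (a n) / ∑ m, Real.exp (a m)

/-- The Shannon entropy (with natural logarithm) of a vector `p : ℝ^N`,
`H(p) = -∑ n, p n * log (p n)`. -/
noncomputable def shannonEntropy {N : ℕ} (p : Fin N → ℝ) : ℝ :=
  -∑ n, p n * Real.log (p n)

lemma entropy_softmax_closed {N : ℕ} (hN : 1 ≤ N) (b : Fin N → ℝ) :
    shannonEntropy (softmax b)
      = Real.log (∑ m, Real.exp (b m))
        - (∑ n, Real.exp (b n) * b n) / (∑ m, Real.exp (b m)) := by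
  have hne : Nonempty (Fin N) := ⟨⟨0, hN⟩⟩
  set E := ∑ m, Real.exp (b m) with hE
  have hEpos : 0 < E := Finset.sum_pos (fun n _ => Real.exp_pos _) Finset.univ_nonempty
  have hE0 : E ≠ 0 := hEpos.ne'
  have hlog : ∀ n, Real.log (softmax b n) = b n - Real.log E := by
    intro n
    rw [softmax, ← hE, Real.log_div (Real.exp_ne_zero _) hE0, Real.log_exp]
  unfold shannonEntropy
  have : ∑ n, softmax b n * Real.log (softmax b n)
      = ((∑ n, Real.exp (b n) * b n) - Real.log E * E) / E := by
    rw [eq_div_iff hE0, Finset.sum_mul]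
    have : ∀ n ∈ Finset.univ, softmax b n * Real.log (softmax b n) * E
        = Real.exp (b n) * b n - Real.log E * Real.exp (b n) := by
      intro n _
      rw [hlog, softmax, ← hE]
      field_simp
    rw [Finset.sum_congr rfl this, Finset.sum_sub_distrib, ← Finset.mul_sum, ← hE]
  rw [this]
  field_simp
  ring

/-- Exact first-order entropy change under a natural policy gradient step:
with `p = softmax a`, the map `h(η) = H(softmax (a + η • A))` has derivative at `η = 0`
equal to `-Cov_{n ∼ p}(log p_n, A_n)
 = -(∑ n, p n * log (p n) * A n - (∑ n, p n * log (p n)) * (∑ n, p n * A n))`. -/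
theorem entropy_deriv_natural_policy_gradient_step
    (N : ℕ) (hN : 1 ≤ N) (a A : Fin N → ℝ) :
    HasDerivAt (fun η : ℝ => shannonEntropy (softmax (a + η • A)))
      (-((∑ n, softmax a n * Real.log (softmax a n) * A n)
          - (∑ n, softmax a n * Real.log (softmax a n)) * (∑ n, softmax a n * A n)))
      0 := by
  have hne : Nonempty (Fin N) := ⟨⟨0, hN⟩⟩
  set E := ∑ m, Real.exp (a m) with hEdef
  set U := ∑ n, Real.exp (a n) * a n with hUdef
  set V := ∑ n, A n * Real.exp (a n) with hVdef
  set W := ∑ n, A n * Real.exp (a n) * a n with hWdef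
  have hEpos : 0 < E := Finset.sum_pos (fun n _ => Real.exp_pos _) Finset.univ_nonempty
  have hE0 : E ≠ 0 := hEpos.ne'
  -- derivative of inner functions
  have hb : ∀ n : Fin N, HasDerivAt (fun η : ℝ => a n + η * A n) (A n) 0 := by
    intro n
    simpa using ((hasDerivAt_id (0:ℝ)).mul_const (A n)).const_add (a n)
  have hS : HasDerivAt (fun η : ℝ => ∑ m, Real.exp (a m + η * A m)) V 0 := by
    rw [hVdef]
    apply HasDerivAt.fun_sum
    intro n _
    simpa [mul_comm] using (hb n).exp
  have hT : HasDerivAt (fun η : ℝ => ∑ n, Real.exp (a n + η * A n) * (a n + η * A n))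
      (W + V) 0 := by
    have : W + V = ∑ n, (Real.exp (a n) * A n * a n + Real.exp (a n) * A n) := by
      rw [hWdef, hVdef, ← Finset.sum_add_distrib]
      apply Finset.sum_congr rfl; intro n _; ring
    rw [this]
    apply HasDerivAt.fun_sum
    intro n _
    have := ((hb n).exp.fun_mul (hb n))
    simpa [mul_comm] using this
  have hSpos : ∀ η : ℝ, 0 < ∑ m, Real.exp (a m + η * A m) :=
    fun η => Finset.sum_pos (fun n _ => Real.exp_pos _) Finset.univ_nonempty
  have hmain : HasDerivAt
      (fun η : ℝ => Real.log (∑ m, Real.exp (a m + η * A m))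
        - (∑ n, Real.exp (a n + η * A n) * (a n + η * A n)) / (∑ m, Real.exp (a m + η * A m)))
      (V / E - ((W + V) * E - U * V) / E ^ 2) 0 := by
    have h1 := hS.log (hSpos 0).ne'
    have h2 := hT.div hS (hSpos 0).ne'
    have hE0' : (∑ m, Real.exp (a m + (0:ℝ) * A m)) = E := by simp [hEdef]
    have hU0 : (∑ n, Real.exp (a n + (0:ℝ) * A n) * (a n + (0:ℝ) * A n)) = U := by
      simp [hUdef]
    rw [hE0'] at h1
    rw [hE0', hU0] at h2
    exact h1.sub h2
  -- identify the function
  have hfun : (fun η : ℝ => shannonEntropy (softmax (a + η • A)))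
      = (fun η : ℝ => Real.log (∑ m, Real.exp (a m + η * A m))
        - (∑ n, Real.exp (a n + η * A n) * (a n + η * A n)) / (∑ m, Real.exp (a m + η * A m))) := by
    funext η
    have := entropy_softmax_closed hN (a + η • A)
    simpa [Pi.add_apply, Pi.smul_apply, smul_eq_mul] using this
  rw [hfun]
  convert hmain using 1
  -- identify the derivative value
  have hlogp : ∀ n, Real.log (softmax a n) = a n - Real.log E := by
    intro n
    rw [softmax, ← hEdef, Real.log_div (Real.exp_ne_zero _) hE0, Real.log_exp]
  have e1 : ∑ n, softmax a n * Real.log (softmax a n) * A n = (W - Real.log E * V) / E := by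
    rw [eq_div_iff hE0, Finset.sum_mul]
    have : ∀ n ∈ Finset.univ, softmax a n * Real.log (softmax a n) * A n * E
        = A n * Real.exp (a n) * a n - Real.log E * (A n * Real.exp (a n)) := by
      intro n _
      rw [hlogp, softmax, ← hEdef]
      field_simp
    rw [Finset.sum_congr rfl this, Finset.sum_sub_distrib, ← Finset.mul_sum, ← hWdef, ← hVdef]
  have e2 : ∑ n, softmax a n * Real.log (softmax a n) = (U - Real.log E * E) / E := by
    rw [eq_div_iff hE0, Finset.sum_mul]
    have : ∀ n ∈ Finset.univ, softmax a n * Real.log (softmax a n) * E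
        = Real.exp (a n) * a n - Real.log E * Real.exp (a n) := by
      intro n _
      rw [hlogp, softmax, ← hEdef]
      field_simp
    rw [Finset.sum_congr rfl this, Finset.sum_sub_distrib, ← Finset.mul_sum, ← hUdef, ← hEdef]
  have e3 : ∑ n, softmax a n * A n = V / E := by
    rw [eq_div_iff hE0, Finset.sum_mul]
    have : ∀ n ∈ Finset.univ, softmax a n * A n * E = A n * Real.exp (a n) := by
      intro n _
      rw [softmax, ← hEdef]
      field_simp
    rw [Finset.sum_congr rfl this, ← hVdef]
  rw [e1, e2, e3]
  field_simp
  ring
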